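/- arXiv:2204.03787 — 2 statements merged into one kernel-verified Lean document; each statement's English description precedes it below -/
import Mathlib

section
/- Let G = K_{n₁,n₂,…,n_r} be the complete r-partite graph of order n = n₁ + n₂ + ⋯ + n_r with n ≥ 4, and let α ∈ [0,1]. Then for every i ∈ {1,2,…,r}, the number α(n − n_i/2) − ½ is an eigenvalue of RD_α(G) with multiplicity at least n_i − 1. -/
open Matrix BigOperators Finset

/-- The reciprocal distance (Harary) matrix of a graph. -/
noncomputable def RDmat {V : Type*} [Fintype V] [DecidableEq V] (G : SimpleGraph V) :
    Matrix V V ℝ :=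
  Matrix.of fun i j => if i = j then 0 else (1 : ℝ) / (G.dist i j)

/-- The reciprocal transmission of a vertex. -/
noncomputable def RTr {V : Type*} [Fintype V] [DecidableEq V] (G : SimpleGraph V) (v : V) : ℝ :=
  ∑ u ∈ Finset.univ.erase v, (1 : ℝ) / (G.dist u v)

/-- The generalized reciprocal distance matrix `RD_α(G) = α RT(G) + (1-α) RD(G)`. -/
noncomputable def RDalpha {V : Type*} [Fintype V] [DecidableEq V] (G : SimpleGraph V) (α : ℝ) :
    Matrix V V ℝ :=
  α • Matrix.diagonal (RTr G) + (1 - α) • RDmat G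

/-- The `i`-th largest eigenvalue (1-indexed, with multiplicity) of a real matrix,
obtained from the roots of its characteristic polynomial sorted decreasingly. -/
noncomputable def eigDesc {V : Type*} [Fintype V] [DecidableEq V] (M : Matrix V V ℝ) (i : ℕ) : ℝ :=
  ((M.charpoly.roots.sort (· ≤ ·)).reverse).getD (i - 1) 0

/-- The spectral radius (largest eigenvalue) of a real symmetric matrix. -/
noncomputable def specRadius {V : Type*} [Fintype V] [DecidableEq V] (M : Matrix V V ℝ) : ℝ :=
  eigDesc M 1

/-- The join of two graphs. -/
def gjoin {V₁ V₂ : Type*} (G₁ : SimpleGraph V₁) (G₂ : SimpleGraph V₂) :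
    SimpleGraph (V₁ ⊕ V₂) where
  Adj x y := match x, y with
    | Sum.inl a, Sum.inl b => G₁.Adj a b
    | Sum.inr a, Sum.inr b => G₂.Adj a b
    | Sum.inl _, Sum.inr _ => True
    | Sum.inr _, Sum.inl _ => True
  symm := ⟨by rintro (a|a) (b|b) h <;> first | exact G₁.adj_symm h | exact G₂.adj_symm h | trivial⟩
  loopless := ⟨by rintro (a|a) h <;> first | exact G₁.ne_of_adj h rfl | exact G₂.ne_of_adj h rfl⟩

section
open Polynomial

section LinAlg
variable {V : Type*} [Fintype V] [DecidableEq V]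

lemma aux_charpoly_conj_units (U M : Matrix V V ℝ) (hU : U ∈ Matrix.unitaryGroup V ℝ) :
    (U * M * star U).charpoly = M.charpoly := by
  have h1 : U * star U = 1 := (Matrix.mem_unitaryGroup_iff).mp hU
  have h2 : star U * U = 1 := (Matrix.mem_unitaryGroup_iff').mp hU
  unfold Matrix.charpoly Matrix.charmatrix
  have e1 : ∀ N : Matrix V V ℝ, (C : ℝ →+* ℝ[X]).mapMatrix N = N.map C := fun _ => rfl
  have hsc : Matrix.scalar V (X : ℝ[X]) = (X : ℝ[X]) • (1 : Matrix V V ℝ[X]) := by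
    ext a b
    simp [Matrix.scalar_apply, Matrix.smul_apply, Matrix.one_apply, Matrix.diagonal_apply]
  have hscalar : (Matrix.scalar V (X : ℝ[X])) =
      U.map C * (Matrix.scalar V (X : ℝ[X])) * (star U).map C := by
    rw [hsc, mul_smul_comm, smul_mul_assoc, mul_one, ← Matrix.map_mul, h1]
    simp
  rw [e1, Matrix.map_mul, Matrix.map_mul]
  conv_lhs => rw [hscalar, ← Matrix.sub_mul, ← Matrix.mul_sub]
  rw [Matrix.det_mul, Matrix.det_mul, mul_comm, ← mul_assoc, ← Matrix.det_mul,
    ← Matrix.map_mul, h2, e1]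
  simp

lemma aux_charpoly_diagonal (d : V → ℝ) :
    (Matrix.diagonal d).charpoly = ∏ j, (X - C (d j)) := by
  have h : (Matrix.diagonal d).charmatrix = Matrix.diagonal (fun j => X - C (d j)) := by
    ext a b
    by_cases hab : a = b
    · subst hab; simp [Matrix.charmatrix_apply_eq]
    · simp [Matrix.charmatrix_apply_ne _ _ _ hab, Matrix.diagonal_apply_ne _ hab]
  rw [Matrix.charpoly, h, Matrix.det_diagonal]

lemma aux_charpoly_hermitian_roots_count (A : Matrix V V ℝ) (hA : A.IsHermitian) (μ : ℝ) :
    A.charpoly.roots.count μ = (univ.filter (fun j => hA.eigenvalues j = μ)).card := by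
  have hsp := hA.spectral_theorem
  have hd : Matrix.diagonal (RCLike.ofReal ∘ hA.eigenvalues) = Matrix.diagonal hA.eigenvalues := by
    congr 1
  rw [hd] at hsp
  have : A.charpoly = (Matrix.diagonal hA.eigenvalues).charpoly := by
    conv_lhs => rw [hsp]
    exact aux_charpoly_conj_units _ _ (hA.eigenvectorUnitary).2
  rw [this, aux_charpoly_diagonal]
  have : (∏ j, (X - C (hA.eigenvalues j))) =
      (Multiset.map (fun a => X - C a) (univ.val.map hA.eigenvalues)).prod := by
    rw [Multiset.map_map]; rfl
  rw [this, Polynomial.roots_multiset_prod_X_sub_C, Multiset.count_map]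
  simp only [Finset.card_filter]
  rw [Finset.sum_boole]
  simp [Finset.filter, Finset.card, eq_comm]

lemma aux_count_roots_ge (A : Matrix V V ℝ) (hA : A.IsHermitian)
    (μ : ℝ) {k : ℕ} (v : Fin k → V → ℝ) (hli : LinearIndependent ℝ v)
    (heig : ∀ l, A *ᵥ v l = μ • v l) :
    k ≤ A.charpoly.roots.count μ := by
  rw [aux_charpoly_hermitian_roots_count A hA μ]
  set B : Matrix V V ℝ := A - μ • 1 with hB
  have hker : ∀ l, v l ∈ LinearMap.ker B.mulVecLin := by
    intro l
    simp only [LinearMap.mem_ker, Matrix.mulVecLin_apply, hB, Matrix.sub_mulVec,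
      Matrix.smul_mulVec, Matrix.one_mulVec, heig l, sub_self]
  have hkle : k ≤ Module.finrank ℝ (LinearMap.ker B.mulVecLin) := by
    have hli' : LinearIndependent ℝ (fun l => (⟨v l, hker l⟩ :
        LinearMap.ker B.mulVecLin)) := by
      apply LinearIndependent.of_comp (LinearMap.ker B.mulVecLin).subtype
      exact hli
    simpa using hli'.fintype_card_le_finrank
  have hBconj : B = (hA.eigenvectorUnitary : Matrix V V ℝ) *
      Matrix.diagonal (fun j => hA.eigenvalues j - μ) *
      star (hA.eigenvectorUnitary : Matrix V V ℝ) := by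
    have hsp := hA.spectral_theorem
    have hd : Matrix.diagonal (RCLike.ofReal ∘ hA.eigenvalues) =
        Matrix.diagonal hA.eigenvalues := by congr 1
    rw [hd] at hsp
    have h1 : (hA.eigenvectorUnitary : Matrix V V ℝ) *
        star (hA.eigenvectorUnitary : Matrix V V ℝ) = 1 :=
      (Matrix.mem_unitaryGroup_iff).mp (hA.eigenvectorUnitary).2
    have hdiag : Matrix.diagonal (fun j => hA.eigenvalues j - μ) =
        Matrix.diagonal hA.eigenvalues - μ • 1 := by
      rw [Matrix.smul_one_eq_diagonal, Matrix.diagonal_sub]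
    rw [hdiag, Matrix.mul_sub, Matrix.sub_mul, Matrix.mul_smul, Matrix.mul_one,
      Matrix.smul_mul, h1, hB]
    congr 1
  have hrank : B.rank = (univ.filter (fun j => hA.eigenvalues j ≠ μ)).card := by
    rw [hBconj]
    have hu := (hA.eigenvectorUnitary).2
    have hdet1 : IsUnit (hA.eigenvectorUnitary : Matrix V V ℝ).det := by
      apply isUnit_iff_ne_zero.mpr
      intro h
      have := (Matrix.mem_unitaryGroup_iff).mp hu
      have := congr_arg Matrix.det this
      rw [Matrix.det_mul, h, zero_mul] at this
      simp at this
    have hdet2 : IsUnit (star (hA.eigenvectorUnitary : Matrix V V ℝ)).det := by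
      rw [Matrix.star_eq_conjTranspose, Matrix.det_conjTranspose]
      exact hdet1.star
    rw [Matrix.rank_mul_eq_left_of_isUnit_det _ _ hdet2,
      Matrix.rank_mul_eq_right_of_isUnit_det _ _ hdet1, Matrix.rank_diagonal]
    rw [Fintype.card_subtype]
    congr 1
    apply Finset.filter_congr
    intro j _
    simp [sub_eq_zero]
  have hrn : B.rank + Module.finrank ℝ (LinearMap.ker B.mulVecLin) = Fintype.card V := by
    have := LinearMap.finrank_range_add_finrank_ker B.mulVecLin
    rwa [Module.finrank_fintype_fun_eq_card] at this
  have hcards : (univ.filter (fun j => hA.eigenvalues j ≠ μ)).card +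
      (univ.filter (fun j => hA.eigenvalues j = μ)).card = Fintype.card V := by
    rw [add_comm]
    simpa using Finset.card_filter_add_card_filter_not
      (s := univ) (p := fun j => hA.eigenvalues j = μ)
  omega

end LinAlg

section Graph
variable {r : ℕ} (n : Fin r → ℕ)

local notation "V'" => (j : Fin r) × Fin (n j)
local notation "G'" => SimpleGraph.completeMultipartiteGraph (fun j => Fin (n j))

lemma aux_adj_iff (u w : V') : (G').Adj u w ↔ u.1 ≠ w.1 := by simp

lemma aux_exists_other_part (hconn : (G').Connected) (i : Fin r) (hni : 2 ≤ n i) :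
    ∃ w : V', w.1 ≠ i := by
  by_contra h
  push_neg at h
  set p : V' := ⟨i, ⟨0, by omega⟩⟩
  set q : V' := ⟨i, ⟨1, by omega⟩⟩
  have hpq : p ≠ q := by
    simp only [p, q, ne_eq, Sigma.mk.inj_iff, heq_eq_eq, Fin.mk.injEq]
    omega
  obtain ⟨W⟩ := hconn.preconnected p q
  have hnil : ¬ W.Nil := SimpleGraph.Walk.not_nil_of_ne hpq
  have hadj := (W.firstDart hnil).adj
  rw [aux_adj_iff] at hadj
  exact hadj ((h _).trans (h _).symm)

lemma aux_dist_eq (hconn : (G').Connected) (i : Fin r) (hni : 2 ≤ n i)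
    (u w : V') (hne : u ≠ w) (hw : w.1 = i) :
    (G').dist u w = if u.1 = i then 2 else 1 := by
  by_cases hu : u.1 = i
  · simp only [hu, if_true]
    obtain ⟨z, hz⟩ := aux_exists_other_part n hconn i hni
    have h1 : (G').Adj u z := (aux_adj_iff n u z).mpr (by rw [hu]; exact fun h => hz h.symm)
    have h2 : (G').Adj z w := (aux_adj_iff n z w).mpr (by rw [hw]; exact hz)
    have hle : (G').dist u w ≤ 2 := by
      have := SimpleGraph.dist_le
        (SimpleGraph.Walk.cons h1 (SimpleGraph.Walk.cons h2 SimpleGraph.Walk.nil))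
      simpa using this
    have hpos : 0 < (G').dist u w := hconn.pos_dist_of_ne hne
    have hne1 : (G').dist u w ≠ 1 := by
      intro h
      have := (SimpleGraph.dist_eq_one_iff_adj).mp h
      rw [aux_adj_iff] at this
      exact this (hu.trans hw.symm)
    omega
  · simp only [hu, if_false]
    exact SimpleGraph.dist_eq_one_iff_adj.mpr ((aux_adj_iff n u w).mpr (by rw [hw]; exact hu))

lemma aux_RTr_eq (hconn : (G').Connected) (i : Fin r) (hni : 2 ≤ n i)
    (p : V') (hp : p.1 = i) :
    RTr (G') p = (∑ j, (n j : ℝ)) - (n i : ℝ) / 2 - 1 / 2 := by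
  unfold RTr
  have hcong : ∀ u ∈ Finset.univ.erase p,
      (1 : ℝ) / ((G').dist u p) = if u.1 = i then 1/2 else 1 := by
    intro u hu
    rw [aux_dist_eq n hconn i hni u p (Finset.ne_of_mem_erase hu) hp]
    split <;> norm_num
  rw [Finset.sum_congr rfl hcong, Finset.sum_erase_eq_sub (Finset.mem_univ p)]
  have hsum : ∑ u : V', (if u.1 = i then (1:ℝ)/2 else 1) =
      (∑ j, (n j : ℝ)) - (n i : ℝ) / 2 := by
    rw [← Finset.univ_sigma_univ, Finset.sum_sigma]
    have : ∀ j : Fin r, ∑ _t : Fin (n j), (if j = i then (1:ℝ)/2 else 1)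
        = (n j : ℝ) - (if j = i then (n j : ℝ)/2 else 0) := by
      intro j
      rw [Finset.sum_const, Finset.card_univ, Fintype.card_fin]
      split <;> ring
    rw [Finset.sum_congr rfl (fun j _ => this j), Finset.sum_sub_distrib,
      Finset.sum_ite_eq' Finset.univ i (fun j => (n j : ℝ)/2)]
    simp
  rw [hsum, hp, if_pos rfl]

end Graph


end

/-- Theorem 2.8(i): eigenvalues of `RD_α` of the complete multipartite graph. -/
theorem stmt4 (r : ℕ) (n : Fin r → ℕ)
    (hconn : (SimpleGraph.completeMultipartiteGraph (fun i => Fin (n i))).Connected)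
    (hn : 4 ≤ ∑ i, n i) (α : ℝ) (hα : α ∈ Set.Icc (0 : ℝ) 1) (i : Fin r) :
    n i - 1 ≤ (RDalpha (SimpleGraph.completeMultipartiteGraph (fun i => Fin (n i))) α).charpoly.roots.count
      (α * ((∑ j, n j : ℕ) - (n i : ℝ) / 2) - 1 / 2) := by
  by_cases hni : n i ≤ 1
  · have h0 : n i - 1 = 0 := by omega
    rw [h0]
    exact Nat.zero_le _
  push_neg at hni
  have hni2 : 2 ≤ n i := hni
  set G := SimpleGraph.completeMultipartiteGraph (fun j => Fin (n j)) with hG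
  set μ : ℝ := α * ((∑ j, n j : ℕ) - (n i : ℝ) / 2) - 1 / 2 with hμ
  -- Hermitian
  have hH : (RDalpha G α).IsHermitian := by
    show (RDalpha G α)ᴴ = RDalpha G α
    ext a b
    simp only [Matrix.conjTranspose_apply, RDalpha, Matrix.add_apply, Matrix.smul_apply,
      Matrix.diagonal_apply, RDmat, Matrix.of_apply, star_trivial]
    by_cases h : a = b
    · subst h; rfl
    · simp [h, Ne.symm h, SimpleGraph.dist_comm]
  -- eigenvectors
  let p : (j : Fin r) × Fin (n j) := ⟨i, ⟨0, by omega⟩⟩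
  let q : Fin (n i - 1) → (j : Fin r) × Fin (n j) := fun l => ⟨i, ⟨l.1 + 1, by omega⟩⟩
  let v : Fin (n i - 1) → ((j : Fin r) × Fin (n j)) → ℝ :=
    fun l w => (if w = p then 1 else 0) - (if w = q l then 1 else 0)
  have hqp : ∀ l, q l ≠ p := by
    intro l h
    simp only [q, p, Sigma.mk.inj_iff, heq_eq_eq, Fin.mk.injEq] at h
    omega
  have hqinj : ∀ l m, q l = q m ↔ l = m := by
    intro l m
    constructor
    · intro h
      simp only [q, Sigma.mk.inj_iff, heq_eq_eq, Fin.mk.injEq] at h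
      exact Fin.ext (by omega)
    · rintro rfl; rfl
  -- linear independence
  have hli : LinearIndependent ℝ v := by
    rw [Fintype.linearIndependent_iff]
    intro c hc l
    have h := congr_fun hc (q l)
    simp only [Finset.sum_apply, Pi.smul_apply, smul_eq_mul, Pi.zero_apply, v] at h
    have h1 : ∀ m, c m * ((if q l = p then (1:ℝ) else 0) - (if q l = q m then 1 else 0))
        = if m = l then -c m else 0 := by
      intro m
      rw [if_neg (hqp l)]
      by_cases hml : m = l
      · rw [if_pos ((hqinj l m).mpr hml.symm), if_pos hml]; ring
      · rw [if_neg fun hh => hml ((hqinj l m).mp hh).symm, if_neg hml]; ring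
    rw [Finset.sum_congr rfl (fun m _ => h1 m), Finset.sum_ite_eq' Finset.univ l] at h
    simp only [Finset.mem_univ, if_true, neg_eq_zero] at h
    exact h
  -- eigen equation
  have heig : ∀ l, (RDalpha G α) *ᵥ v l = μ • v l := by
    intro l
    funext a
    have hmv : ((RDalpha G α) *ᵥ v l) a = (RDalpha G α) a p - (RDalpha G α) a (q l) := by
      simp only [Matrix.mulVec, dotProduct, v, mul_sub, mul_ite, mul_one, mul_zero]
      rw [Finset.sum_sub_distrib, Finset.sum_ite_eq' Finset.univ p,
        Finset.sum_ite_eq' Finset.univ (q l)]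
      simp
    have hoff : ∀ a b : (j : Fin r) × Fin (n j), a ≠ b →
        (RDalpha G α) a b = (1 - α) * ((1:ℝ) / (G.dist a b)) := by
      intro a b hab
      simp [RDalpha, Matrix.add_apply, Matrix.smul_apply, Matrix.diagonal_apply_ne _ hab,
        RDmat, Matrix.of_apply, hab]
    have hdiag : ∀ a : (j : Fin r) × Fin (n j), (RDalpha G α) a a = α * RTr G a := by
      intro a
      simp [RDalpha, Matrix.add_apply, Matrix.smul_apply, Matrix.diagonal_apply_eq,
        RDmat, Matrix.of_apply]
    have hRTrp : RTr G p = (∑ j, (n j : ℝ)) - (n i : ℝ) / 2 - 1/2 :=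
      aux_RTr_eq n hconn i hni2 p rfl
    have hRTrq : RTr G (q l) = (∑ j, (n j : ℝ)) - (n i : ℝ) / 2 - 1/2 :=
      aux_RTr_eq n hconn i hni2 (q l) rfl
    have hcast : ((∑ j, n j : ℕ) : ℝ) = ∑ j, (n j : ℝ) := by push_cast; rfl
    rw [hmv]
    by_cases hap : a = p
    · subst hap
      rw [hdiag, hoff _ _ (fun hh => hqp l hh.symm),
        aux_dist_eq n hconn i hni2 p (q l) (fun hh => hqp l hh.symm) rfl]
      rw [if_pos (rfl : p.1 = i)]
      have : v l p = 1 := by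
        simp [v, Ne.symm (hqp l)]
      rw [Pi.smul_apply, this, smul_eq_mul, mul_one, hRTrp, hμ, hcast]
      push_cast
      ring
    · by_cases haq : a = q l
      · subst haq
        rw [hdiag, hoff _ _ (hqp l), aux_dist_eq n hconn i hni2 (q l) p (hqp l) rfl]
        rw [if_pos (rfl : (q l).1 = i)]
        have : v l (q l) = -1 := by
          simp [v, hqp l]
        rw [Pi.smul_apply, this, smul_eq_mul, hRTrq, hμ, hcast]
        push_cast
        ring
      · have hva : v l a = 0 := by
          simp only [v, if_neg hap, if_neg haq]
          ring
        rw [hoff _ _ hap, hoff _ _ haq, aux_dist_eq n hconn i hni2 a p hap rfl,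
          aux_dist_eq n hconn i hni2 a (q l) haq rfl, Pi.smul_apply, hva, smul_eq_mul, mul_zero]
        ring
  exact aux_count_roots_ge (RDalpha G α) hH μ v hli heig
end

section
/- Let G be a connected graph on n vertices, let e be an edge not in E(G), and let G̃ = G + e be the graph obtained by adding e. Then for every α with ½ ≤ α ≤ 1 and every i with 1 ≤ i ≤ n, we have λ_i(RD_α(G̃)) ≥ λ_i(RD_α(G)). -/
open Matrix BigOperators Finset

set_option linter.unusedSectionVars false
section Aux
open Polynomial List
variable {V : Type*} [Fintype V] [DecidableEq V]


lemma charpoly_conj' (U W A : Matrix V V ℝ) (h1 : U * W = 1) (h2 : W * U = 1) :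
    (U * A * W).charpoly = A.charpoly := by
  unfold Matrix.charpoly
  have hsc : (U.map (C : ℝ → ℝ[X])) * (Matrix.scalar V (X : ℝ[X])) * (W.map C) =
      Matrix.scalar V (X : ℝ[X]) := by
    have : Matrix.scalar V (X : ℝ[X]) = (X : ℝ[X]) • (1 : Matrix V V ℝ[X]) := by
      ext i j; simp [Matrix.scalar_apply, Matrix.diagonal_apply, Matrix.one_apply]
    rw [this, mul_smul_comm, mul_one, smul_mul_assoc, ← Matrix.map_mul, h1]
    simp
  have key : charmatrix (U * A * W) =
      (U.map (C : ℝ → ℝ[X])) * charmatrix A * (W.map C) := by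
    unfold charmatrix
    simp only [Matrix.mul_sub, Matrix.sub_mul, RingHom.mapMatrix_apply]
    rw [hsc, ← Matrix.map_mul, ← Matrix.map_mul, Matrix.mul_assoc]
  rw [key, det_mul, det_mul, mul_comm, ← mul_assoc, ← det_mul, ← Matrix.map_mul, h2]
  simp

lemma charpoly_diag (d : V → ℝ) :
    (Matrix.diagonal d).charpoly =
      (Multiset.map (fun a => X - C a) (Multiset.map d Finset.univ.val)).prod := by
  unfold Matrix.charpoly charmatrix
  rw [Matrix.scalar_apply, RingHom.mapMatrix_apply]
  rw [show (Matrix.diagonal d).map (C : ℝ → ℝ[X]) = Matrix.diagonal (fun i => C (d i)) from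
    Matrix.diagonal_map (by simp), Matrix.diagonal_sub, Matrix.det_diagonal]
  rw [Multiset.map_map]
  rw [Finset.prod_eq_multiset_prod]
  rfl

lemma roots_charpoly (A : Matrix V V ℝ) (hA : A.IsHermitian) :
    A.charpoly.roots = Multiset.map hA.eigenvalues Finset.univ.val := by
  have hU := hA.spectral_theorem
  have h1 : (hA.eigenvectorUnitary : Matrix V V ℝ) * star (hA.eigenvectorUnitary : Matrix V V ℝ) = 1 := by
    exact (Matrix.mem_unitaryGroup_iff).mp hA.eigenvectorUnitary.2
  have h2 : star (hA.eigenvectorUnitary : Matrix V V ℝ) * (hA.eigenvectorUnitary : Matrix V V ℝ) = 1 := by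
    exact (Matrix.mem_unitaryGroup_iff').mp hA.eigenvectorUnitary.2
  have : A.charpoly = (Matrix.diagonal (RCLike.ofReal ∘ hA.eigenvalues)).charpoly := by
    conv_lhs => rw [hU]
    exact charpoly_conj' _ _ _ h1 h2
  rw [this]
  have : (RCLike.ofReal ∘ hA.eigenvalues : V → ℝ) = hA.eigenvalues := by
    ext i; simp
  rw [this, charpoly_diag, Polynomial.roots_multiset_prod_X_sub_C]


lemma sorted_rel' {l : List ℝ} (hl : l.Pairwise (· ≤ ·)) {i j : ℕ} (hij : i ≤ j)
    (hj : j < l.length) : l[i]'(lt_of_le_of_lt hij hj) ≤ l[j] := by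
  rcases eq_or_lt_of_le hij with h | h
  · subst h; rfl
  · exact hl.rel_get_of_lt (a := ⟨i, lt_of_le_of_lt hij hj⟩) (b := ⟨j, hj⟩) h

/-- key characterization: in an ascending sorted list, the k-th largest is ≥ c iff
at least k elements are ≥ c. -/
lemma sorted_getD_reverse_ge_iff (l : List ℝ) (hl : l.Pairwise (· ≤ ·)) {k : ℕ}
    (hk1 : 1 ≤ k) (hk : k ≤ l.length) (c : ℝ) :
    c ≤ l.reverse.getD (k-1) 0 ↔ k ≤ l.countP (fun x => decide (c ≤ x)) := by
  have hrl : k - 1 < l.reverse.length := by simp; omega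
  have hidx : l.length - 1 - (k - 1) = l.length - k := by omega
  have hjl : l.length - k < l.length := by omega
  rw [List.getD_eq_getElem _ _ hrl, List.getElem_reverse]; simp only [hidx]
  set j := l.length - k with hj
  constructor
  · intro hc
    have hsplit := List.take_append_drop j l
    have hcount : l.countP (fun x => decide (c ≤ x)) =
        (l.take j).countP (fun x => decide (c ≤ x)) +
        (l.drop j).countP (fun x => decide (c ≤ x)) := by
      conv_lhs => rw [← hsplit]
      rw [List.countP_append]
    have hall : (l.drop j).countP (fun x => decide (c ≤ x)) = (l.drop j).length := by
      rw [List.countP_eq_length]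
      intro a ha
      rw [List.mem_drop_iff_getElem] at ha
      obtain ⟨i, hi, rfl⟩ := ha
      simpa using le_trans hc (sorted_rel' hl (Nat.le_add_right j i) (by omega))
    rw [hcount, hall, List.length_drop]
    omega
  · intro hcount
    by_contra hc
    push_neg at hc
    have hsplit := List.take_append_drop (j+1) l
    have h0 : (l.take (j+1)).countP (fun x => decide (c ≤ x)) = 0 := by
      rw [List.countP_eq_zero]
      intro a ha
      rw [List.mem_take_iff_getElem] at ha
      obtain ⟨i, hi, rfl⟩ := ha
      have : i ≤ j := by omega
      simpa using not_le.mpr (lt_of_le_of_lt (sorted_rel' hl this hjl) hc)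
    have : l.countP (fun x => decide (c ≤ x)) ≤ (l.drop (j+1)).length := by
      conv_lhs => rw [← hsplit]
      rw [List.countP_append, h0, Nat.zero_add]
      exact List.countP_le_length
    rw [List.length_drop] at this
    omega



lemma toEuclideanLin_eigvec (A : Matrix V V ℝ) (hA : A.IsHermitian) (j : V) :
    Matrix.toEuclideanLin A (hA.eigenvectorBasis j) =
      hA.eigenvalues j • hA.eigenvectorBasis j := by
  have h := hA.mulVec_eigenvectorBasis j
  apply (WithLp.equiv 2 (V → ℝ)).injective
  simp only [Matrix.toEuclideanLin_apply, Equiv.apply_symm_apply]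
  ext i
  have := congrFun h i
  simpa using this

lemma repr_toEuclideanLin (A : Matrix V V ℝ) (hA : A.IsHermitian) (x : EuclideanSpace ℝ V)
    (j : V) :
    hA.eigenvectorBasis.repr (Matrix.toEuclideanLin A x) j =
      hA.eigenvalues j * hA.eigenvectorBasis.repr x j := by
  rw [OrthonormalBasis.repr_apply_apply, OrthonormalBasis.repr_apply_apply]
  have hsym := (Matrix.isHermitian_iff_isSymmetric.mp hA)
  rw [← hsym (hA.eigenvectorBasis j) x, toEuclideanLin_eigvec A hA j]
  rw [inner_smul_left]
  simp

lemma inner_eq_sum_repr (b : OrthonormalBasis V ℝ (EuclideanSpace ℝ V))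
    (x y : EuclideanSpace ℝ V) :
    (inner ℝ x y : ℝ) = ∑ j, b.repr x j * b.repr y j := by
  rw [← b.repr.inner_map_map x y, PiLp.inner_apply]
  simp [RCLike.inner_apply, mul_comm]

lemma quad_eq_sum (A : Matrix V V ℝ) (hA : A.IsHermitian) (x : EuclideanSpace ℝ V) :
    (inner ℝ x (Matrix.toEuclideanLin A x) : ℝ) =
      ∑ j, hA.eigenvalues j * (hA.eigenvectorBasis.repr x j)^2 := by
  rw [inner_eq_sum_repr hA.eigenvectorBasis]
  refine Finset.sum_congr rfl fun j _ => ?_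
  rw [repr_toEuclideanLin]
  ring

lemma repr_eq_zero_of_span (b : OrthonormalBasis V ℝ (EuclideanSpace ℝ V)) (S : Finset V)
    (x : EuclideanSpace ℝ V) (hx : x ∈ Submodule.span ℝ (Set.range (fun i : S => b i)))
    (j : V) (hj : j ∉ S) : b.repr x j = 0 := by
  induction hx using Submodule.span_induction with
  | mem y hy =>
    obtain ⟨i, rfl⟩ := hy
    rw [OrthonormalBasis.repr_apply_apply]
    exact b.orthonormal.2 (fun h => hj (h ▸ i.2))
  | zero => simp
  | add y z _ _ hy hz => rw [map_add]; simp [Pi.add_apply, hy, hz]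
  | smul c y _ hy => rw [_root_.map_smul]; simp [hy]

lemma finrank_span_basis (b : OrthonormalBasis V ℝ (EuclideanSpace ℝ V)) (S : Finset V) :
    Module.finrank ℝ (Submodule.span ℝ (Set.range (fun i : S => b i))) = S.card := by
  have hli : LinearIndependent ℝ (fun i : S => b i) :=
    (b.orthonormal.linearIndependent).comp _ Subtype.val_injective
  rw [finrank_span_eq_card hli]
  simp

lemma exists_ne_zero_mem_inf (W U : Submodule ℝ (EuclideanSpace ℝ V))
    (h : Fintype.card V < Module.finrank ℝ W + Module.finrank ℝ U) :
    ∃ x : EuclideanSpace ℝ V, x ∈ W ⊓ U ∧ x ≠ 0 := by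
  have hsup : Module.finrank ℝ (W ⊔ U : Submodule ℝ (EuclideanSpace ℝ V)) ≤ Fintype.card V := by
    simpa [finrank_euclideanSpace] using Submodule.finrank_le (W ⊔ U)
  have heq := Submodule.finrank_sup_add_finrank_inf_eq W U
  have hpos : 0 < Module.finrank ℝ (W ⊓ U : Submodule ℝ (EuclideanSpace ℝ V)) := by omega
  rw [Module.finrank_pos_iff] at hpos
  obtain ⟨x, hx⟩ := exists_ne (0 : (W ⊓ U : Submodule ℝ (EuclideanSpace ℝ V)))
  exact ⟨x.1, x.2, fun h => hx (Subtype.ext h)⟩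

lemma card_eig_ge_mono (A P : Matrix V V ℝ) (hA : A.IsHermitian) (hP : P.PosSemidef)
    (hAP : (A + P).IsHermitian) (c : ℝ) :
    (univ.filter fun j => c ≤ hA.eigenvalues j).card ≤
      (univ.filter fun j => c ≤ hAP.eigenvalues j).card := by
  by_contra hcon
  push_neg at hcon
  set S : Finset V := univ.filter fun j => c ≤ hA.eigenvalues j with hS
  set T : Finset V := univ.filter fun j => hAP.eigenvalues j < c with hT
  have hcardT : (univ.filter fun j => c ≤ hAP.eigenvalues j).card + T.card = Fintype.card V := by
    have h := Finset.card_filter_add_card_filter_not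
      (s := (univ : Finset V)) (p := fun j => c ≤ hAP.eigenvalues j)
    simp only [Finset.card_univ] at h
    have heqT : univ.filter (fun j => ¬ c ≤ hAP.eigenvalues j) = T := by
      apply Finset.filter_congr; intro j _; simp [not_le]
    rw [heqT] at h
    exact h
  set bA := hA.eigenvectorBasis with hbA
  set bP := hAP.eigenvectorBasis with hbP
  set W := Submodule.span ℝ (Set.range (fun i : S => bA i)) with hW
  set U := Submodule.span ℝ (Set.range (fun i : T => bP i)) with hU
  have hdim : Fintype.card V < Module.finrank ℝ W + Module.finrank ℝ U := by
    rw [hW, hU, finrank_span_basis, finrank_span_basis]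
    have hSle : S.card ≤ Fintype.card V := Finset.card_le_univ S
    have hTle : (univ.filter fun j => c ≤ hAP.eigenvalues j).card ≤ Fintype.card V :=
      Finset.card_le_univ _
    omega
  obtain ⟨x, hxWU, hx0⟩ := exists_ne_zero_mem_inf W U hdim
  have hxW : x ∈ W := hxWU.1
  have hxU : x ∈ U := hxWU.2
  -- norms
  have hxx : (0:ℝ) < inner ℝ x x := by
    rcases (real_inner_self_nonneg (x := x)).lt_or_eq with h | h
    · exact h
    · exact absurd (inner_self_eq_zero (𝕜 := ℝ).mp h.symm) hx0
  -- lower bound from W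
  have hlow : c * (inner ℝ x x : ℝ) ≤ inner ℝ x (Matrix.toEuclideanLin A x) := by
    rw [quad_eq_sum A hA, inner_eq_sum_repr bA, Finset.mul_sum]
    apply Finset.sum_le_sum
    intro j _
    by_cases hj : j ∈ S
    · have hcj : c ≤ hA.eigenvalues j := by
        rw [hS] at hj; exact (Finset.mem_filter.mp hj).2
      have := sq_nonneg (bA.repr x j)
      nlinarith [this]
    · rw [repr_eq_zero_of_span bA S x hxW j hj]; simp
  -- psd part
  have hpsd : (0:ℝ) ≤ inner ℝ x (Matrix.toEuclideanLin P x) := by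
    have h2 := hP.dotProduct_mulVec_nonneg (WithLp.equiv 2 (V → ℝ) x)
    rw [PiLp.inner_apply]
    simp only [RCLike.inner_apply, starRingEnd_apply, star_trivial]
    simpa [Matrix.toEuclideanLin_apply, dotProduct, mul_comm] using h2
  -- strict upper bound from U
  have hupp : (inner ℝ x (Matrix.toEuclideanLin (A + P) x) : ℝ) < c * inner ℝ x x := by
    rw [quad_eq_sum (A+P) hAP, inner_eq_sum_repr bP, Finset.mul_sum]
    -- there exists j with repr ≠ 0, necessarily in T
    have hex : ∃ j, bP.repr x j ≠ 0 := by
      by_contra hall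
      push_neg at hall
      apply hx0
      have := bP.sum_repr x
      rw [← this]
      simp [hall]
    obtain ⟨j0, hj0⟩ := hex
    have hj0T : j0 ∈ T := by
      by_contra hj0T
      exact hj0 (repr_eq_zero_of_span bP T x hxU j0 hj0T)
    apply Finset.sum_lt_sum
    · intro j _
      by_cases hj : j ∈ T
      · have hcj : hAP.eigenvalues j < c := by
          rw [hT] at hj; exact (Finset.mem_filter.mp hj).2
        nlinarith [sq_nonneg (bP.repr x j)]
      · rw [repr_eq_zero_of_span bP T x hxU j hj]; simp
    · refine ⟨j0, Finset.mem_univ _, ?_⟩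
      have hcj : hAP.eigenvalues j0 < c := by
        rw [hT] at hj0T; exact (Finset.mem_filter.mp hj0T).2
      have : (0:ℝ) < (bP.repr x j0)^2 := by positivity
      nlinarith
  -- combine
  have hsplit : (inner ℝ x (Matrix.toEuclideanLin (A + P) x) : ℝ) =
      inner ℝ x (Matrix.toEuclideanLin A x) + inner ℝ x (Matrix.toEuclideanLin P x) := by
    rw [map_add]
    simp [inner_add_right]
  nlinarith [hlow, hpsd, hupp, hsplit]


-- the iff transported to matrices
lemma eigDesc_ge_iff (A : Matrix V V ℝ) (hA : A.IsHermitian) {i : ℕ} (hi1 : 1 ≤ i)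
    (hin : i ≤ Fintype.card V) (c : ℝ) :
    c ≤ eigDesc A i ↔ i ≤ (univ.filter fun j => c ≤ hA.eigenvalues j).card := by
  have hroots := roots_charpoly A hA
  have hlen : (A.charpoly.roots.sort (· ≤ ·)).length = Fintype.card V := by
    rw [Multiset.length_sort, hroots, Multiset.card_map]
    rfl
  rw [eigDesc, sorted_getD_reverse_ge_iff _ (Multiset.pairwise_sort ..) hi1 (by omega) c]
  congr! 1
  have : (A.charpoly.roots.sort (· ≤ ·)).countP (fun x => decide (c ≤ x)) =
      Multiset.countP (fun x => c ≤ x) A.charpoly.roots := by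
    conv_rhs => rw [← Multiset.sort_eq A.charpoly.roots (· ≤ ·)]
    rw [Multiset.coe_countP]
  rw [this, hroots, Multiset.countP_map]
  rw [Finset.card_filter]
  simp [Finset.sum_boole]
  rfl




lemma dist_anti' {G G' : SimpleGraph V} (h : G ≤ G') (hG : G.Connected) (i j : V) :
    G'.dist i j ≤ G.dist i j := by
  obtain ⟨p, hp⟩ := hG.exists_walk_length_eq_dist i j
  calc G'.dist i j ≤ (p.mapLe h).length := SimpleGraph.dist_le _
  _ = G.dist i j := by rw [SimpleGraph.Walk.length_map]; exact hp

lemma psd_combo (b : Matrix V V ℝ) (hsym : ∀ i j, b i j = b j i) (hnn : ∀ i j, 0 ≤ b i j)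
    {α : ℝ} (hα : 1/2 ≤ α) (hα1 : α ≤ 1) :
    (α • Matrix.diagonal (fun v => ∑ u, b u v) + (1-α) • b).PosSemidef := by
  set M := α • Matrix.diagonal (fun v => ∑ u, b u v) + (1-α) • b with hM
  have hMapp : ∀ i j, M i j = α * (if i = j then (∑ u, b u i) else 0) + (1-α) * b i j := by
    intro i j
    by_cases h : i = j
    · subst h; simp [hM, Matrix.add_apply, Matrix.smul_apply, Matrix.diagonal_apply,
        smul_eq_mul]
    · simp [hM, Matrix.add_apply, Matrix.smul_apply, Matrix.diagonal_apply, h, smul_eq_mul]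
  refine Matrix.PosSemidef.of_dotProduct_mulVec_nonneg ?_ ?_
  · ext i j
    rw [Matrix.conjTranspose_apply, hMapp, hMapp]
    by_cases h : i = j
    · subst h; simp
    · simp [h, Ne.symm h, hsym i j]
  · intro x
    have hstar : star x = x := by ext i; simp
    rw [hstar]
    have hQ : x ⬝ᵥ (M *ᵥ x) = ∑ i, ∑ j, M i j * x i * x j := by
      simp only [dotProduct, Matrix.mulVec, dotProduct, Finset.mul_sum]
      refine Finset.sum_congr rfl fun i _ => Finset.sum_congr rfl fun j _ => by ring
    rw [hQ]
    have hQ2 : ∑ i, ∑ j, M i j * x i * x j =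
        α * (∑ p, ∑ q, b p q * (x q * x q)) + (1-α) * ∑ i, ∑ j, b i j * (x i * x j) := by
      have hterm : ∀ i j, M i j * x i * x j =
          α * (if i = j then (∑ u, b u i) * (x i * x j) else 0) + (1-α) * (b i j * (x i * x j)) := by
        intro i j
        rw [hMapp]
        by_cases h : i = j <;> simp [h] <;> ring
      simp only [hterm, Finset.sum_add_distrib, ← Finset.mul_sum]
      congr 1
      · congr 1
        have : ∀ i : V, (∑ j, if i = j then (∑ u, b u i) * (x i * x j) else 0)
            = ∑ u, b u i * (x i * x i) := by
          intro i
          rw [Finset.sum_ite_eq univ i (fun j => (∑ u, b u i) * (x i * x j))]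
          simp [Finset.sum_mul]
        rw [Finset.sum_congr rfl fun i _ => this i, Finset.sum_comm]
    rw [hQ2]
    -- symmetrization
    have hswap : ∑ p, ∑ q, b p q * (x p * x p) = ∑ p, ∑ q, b p q * (x q * x q) := by
      rw [Finset.sum_comm]
      exact Finset.sum_congr rfl fun p _ => Finset.sum_congr rfl fun q _ => by rw [hsym]
    have hF : ∑ p, ∑ q, (b p q * (α * (x p * x p + x q * x q) + 2*(1-α) * (x p * x q)))
        = 2 * (α * (∑ p, ∑ q, b p q * (x q * x q)) + (1-α) * ∑ i, ∑ j, b i j * (x i * x j)) := by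
      have expand : ∀ p q, b p q * (α * (x p * x p + x q * x q) + 2*(1-α) * (x p * x q))
          = α * (b p q * (x p * x p)) + α * (b p q * (x q * x q))
            + 2 * ((1-α) * (b p q * (x p * x q))) := by intro p q; ring
      simp only [expand, Finset.sum_add_distrib, ← Finset.mul_sum]
      rw [hswap]
      ring
    have hFnn : 0 ≤ ∑ p, ∑ q, (b p q * (α * (x p * x p + x q * x q) + 2*(1-α) * (x p * x q))) := by
      refine Finset.sum_nonneg fun p _ => Finset.sum_nonneg fun q _ => ?_
      have h1 := hnn p q
      have key : 0 ≤ α * (x p * x p + x q * x q) + 2*(1-α) * (x p * x q) := by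
        nlinarith [mul_nonneg (by linarith : (0:ℝ) ≤ 1-α) (sq_nonneg (x p + x q)),
          mul_nonneg (by linarith : (0:ℝ) ≤ 2*α-1)
            (add_nonneg (sq_nonneg (x p)) (sq_nonneg (x q)))]
      exact mul_nonneg h1 key
    linarith [hF ▸ hFnn]


lemma eigDesc_mono (A P : Matrix V V ℝ) (hA : A.IsHermitian) (hP : P.PosSemidef)
    {i : ℕ} (hi1 : 1 ≤ i) (hin : i ≤ Fintype.card V) :
    eigDesc A i ≤ eigDesc (A + P) i := by
  have hAP : (A + P).IsHermitian := hA.add hP.1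
  have h1 : eigDesc A i ≤ eigDesc A i := le_refl _
  rw [eigDesc_ge_iff A hA hi1 hin] at h1
  exact (eigDesc_ge_iff (A+P) hAP hi1 hin _).mpr
    (le_trans h1 (card_eig_ge_mono A P hA hP hAP _))
end Aux

/-- Proposition 3.2: for `1/2 ≤ α ≤ 1`, adding an edge does not decrease any eigenvalue
of `RD_α`. -/
theorem stmt5 {V : Type*} [Fintype V] [DecidableEq V] (G : SimpleGraph V) (hG : G.Connected)
    (u v : V) (huv : u ≠ v) (he : ¬ G.Adj u v)
    (α : ℝ) (hα : α ∈ Set.Icc (1 / 2 : ℝ) 1)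
    (i : ℕ) (hi1 : 1 ≤ i) (hin : i ≤ Fintype.card V) :
    eigDesc (RDalpha (G ⊔ SimpleGraph.fromEdgeSet {s(u, v)}) α) i ≥
      eigDesc (RDalpha G α) i := by
  obtain ⟨hα1, hα2⟩ := hα
  set G' : SimpleGraph V := G ⊔ SimpleGraph.fromEdgeSet {s(u, v)} with hG'def
  have hle : G ≤ G' := le_sup_left
  have hG' : G'.Connected := hG.mono hle
  set b : Matrix V V ℝ := RDmat G' - RDmat G with hb
  have hbapp : ∀ i j, b i j = (if i = j then 0 else (1:ℝ) / (G'.dist i j))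
      - (if i = j then 0 else (1:ℝ) / (G.dist i j)) := by
    intro i j; simp [hb, RDmat, Matrix.sub_apply]
  have hdiag : ∀ i, b i i = 0 := by intro i; rw [hbapp]; simp
  have hsym : ∀ i j, b i j = b j i := by
    intro i j
    rw [hbapp, hbapp, SimpleGraph.dist_comm (G := G'), SimpleGraph.dist_comm (G := G)]
    by_cases h : i = j
    · simp [h]
    · simp [h, Ne.symm h]
  have hnn : ∀ i j, 0 ≤ b i j := by
    intro i j
    rw [hbapp]
    by_cases h : i = j
    · simp [h]
    · simp only [h, if_neg]
      have hpos' : 0 < G'.dist i j := hG'.pos_dist_of_ne h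
      have hmono := dist_anti' hle hG i j
      have h1 : (1:ℝ) / (G.dist i j) ≤ 1 / (G'.dist i j) := by
        apply one_div_le_one_div_of_le
        · exact_mod_cast hpos'
        · exact_mod_cast hmono
      simpa [h] using sub_nonneg.mpr h1
  set P : Matrix V V ℝ := α • Matrix.diagonal (fun v => ∑ u, b u v) + (1-α) • b with hP
  have hPSD : P.PosSemidef := psd_combo b hsym hnn hα1 hα2
  have hRTr : ∀ v, RTr G' v = RTr G v + ∑ u, b u v := by
    intro v
    have herase : ∑ u, b u v = ∑ u ∈ Finset.univ.erase v, b u v :=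
      (Finset.sum_erase _ (by rw [hsym]; exact hdiag v)).symm
    rw [herase, RTr, RTr]
    rw [← Finset.sum_add_distrib]
    refine Finset.sum_congr rfl fun w hw => ?_
    have hwv : w ≠ v := (Finset.mem_erase.mp hw).1
    rw [hbapp]
    simp [hwv]
  have hdecomp : RDalpha G' α = RDalpha G α + P := by
    ext i j
    simp only [RDalpha, hP, Matrix.add_apply, Matrix.smul_apply, smul_eq_mul]
    by_cases h : i = j
    · subst h
      simp only [Matrix.diagonal_apply_eq]
      rw [hRTr i]
      have : RDmat G' i i = RDmat G i i + b i i := by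
        rw [hdiag]; simp [RDmat]
      rw [this, hdiag]
      ring
    · simp only [Matrix.diagonal_apply_ne _ h]
      have : RDmat G' i j = RDmat G i j + b i j := by
        rw [hbapp]; simp [RDmat, h]
      rw [this]
      ring
  have hHerm : (RDalpha G α).IsHermitian := by
    ext i j
    simp only [RDalpha, Matrix.conjTranspose_apply, Matrix.add_apply, Matrix.smul_apply,
      smul_eq_mul, star_trivial]
    by_cases h : i = j
    · subst h; rfl
    · rw [Matrix.diagonal_apply_ne _ h, Matrix.diagonal_apply_ne _ (Ne.symm h)]
      have : RDmat G j i = RDmat G i j := by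
        simp [RDmat, h, Ne.symm h, SimpleGraph.dist_comm]
      rw [this]
  have := eigDesc_mono (RDalpha G α) P hHerm hPSD hi1 hin
  rw [hdecomp]
  exact this
end
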